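/- Let n ≥ 1 and let φ be any attribution method, i.e. a map assigning to every model f : (Fin n → ℝ) → ℝ and every pair of points a, b ∈ ℝⁿ a vector φ(f,a,b) ∈ ℝⁿ, which satisfies: (Efficiency) ∑_{i} φ_i(f,a,b) = f(b) − f(a) for all f, a, b; (Linearity) φ(α·f + β·g, a, b) = α·φ(f,a,b) + β·φ(g,a,b) for all f, g, α, β ∈ ℝ; and (Dummy) φ_i(f,a,b) = 0 whenever f does not depend on coordinate i, i.e. f(x) = f(y) for all x, y with x_j = y_j for every j ≠ i. Then for every feature-separable model f(x) = c + ∑_{i} f_i(x_i), with c ∈ ℝ and f_i : ℝ → ℝ, the attributions are uniquely determined: φ_i(f,a,b) = f_i(b_i) − f_i(a_i) for every i and all points a, b. -/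

import Mathlib

theorem separable_attribution_unique (n : ℕ) (hn : 1 ≤ n)
    (φ : ((Fin n → ℝ) → ℝ) → (Fin n → ℝ) → (Fin n → ℝ) → Fin n → ℝ)
    (hEff : ∀ (f : (Fin n → ℝ) → ℝ) (a b : Fin n → ℝ),
      ∑ i, φ f a b i = f b - f a)
    (hLin : ∀ (f g : (Fin n → ℝ) → ℝ) (α β : ℝ) (a b : Fin n → ℝ) (i : Fin n),
      φ (fun x => α * f x + β * g x) a b i = α * φ f a b i + β * φ g a b i)
    (hDummy : ∀ (f : (Fin n → ℝ) → ℝ) (i : Fin n),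
      (∀ x y : Fin n → ℝ, (∀ j, j ≠ i → x j = y j) → f x = f y) →
      ∀ a b : Fin n → ℝ, φ f a b i = 0)
    (c : ℝ) (fs : Fin n → ℝ → ℝ) (a b : Fin n → ℝ) (i : Fin n) :
    φ (fun x => c + ∑ j, fs j (x j)) a b i = fs i (b i) - fs i (a i) := by
  -- φ of a constant function is 0 at every coordinate
  have hconst : ∀ (d : ℝ) (a b : Fin n → ℝ) (k : Fin n), φ (fun _ => d) a b k = 0 := by
    intro d a b k
    exact hDummy (fun _ => d) k (fun x y _ => rfl) a b
  have hadd : ∀ (f g : (Fin n → ℝ) → ℝ) (a b : Fin n → ℝ) (k : Fin n),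
      φ (fun x => f x + g x) a b k = φ f a b k + φ g a b k := by
    intro f g a b k
    have := hLin f g 1 1 a b k
    simpa using this
  -- additivity over finite sums
  have hsum : ∀ (s : Finset (Fin n)) (g : Fin n → (Fin n → ℝ) → ℝ) (a b : Fin n → ℝ) (k : Fin n),
      φ (fun x => ∑ j ∈ s, g j x) a b k = ∑ j ∈ s, φ (g j) a b k := by
    intro s
    induction s using Finset.induction_on with
    | empty =>
      intro g a b k
      simpa using hconst 0 a b k
    | insert m s' hns ih =>
      intro g a b k
      have h1 : (fun x => ∑ j ∈ insert m s', g j x)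
          = fun x => g m x + ∑ j ∈ s', g j x := by
        funext x; rw [Finset.sum_insert hns]
      rw [h1, hadd, ih]
      rw [Finset.sum_insert hns]
  -- φ of a function depending only on coordinate j, at k ≠ j, is 0
  have hsingle : ∀ (j : Fin n) (h : ℝ → ℝ) (k : Fin n), k ≠ j →
      φ (fun x => h (x j)) a b k = 0 := by
    intro j h k hkj
    refine hDummy _ k (fun x y hxy => ?_) a b
    rw [hxy j (Ne.symm hkj)]
  -- split f
  have hsplit : φ (fun x => c + ∑ j, fs j (x j)) a b i
      = φ (fun _ => c) a b i + ∑ j, φ (fun x => fs j (x j)) a b i := by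
    rw [hadd (fun _ => c) (fun x => ∑ j, fs j (x j)) a b i,
      hsum Finset.univ (fun j x => fs j (x j)) a b i]
  rw [hsplit, hconst]
  have heff := hEff (fun x => fs i (x i)) a b
  have hzero : ∀ j ∈ Finset.univ, j ≠ i → φ (fun x => fs i (x i)) a b j = 0 := by
    intro j _ hji
    exact hDummy _ j (fun x y hxy => by rw [hxy i (Ne.symm hji)]) a b
  have hkey : φ (fun x => fs i (x i)) a b i = fs i (b i) - fs i (a i) := by
    rw [← heff, Finset.sum_eq_single i (fun j _ hji => hzero j (Finset.mem_univ j) hji)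
      (fun h => absurd (Finset.mem_univ i) h)]
  have hrest : ∀ j ∈ Finset.univ, j ≠ i → φ (fun x => fs j (x j)) a b i = 0 := by
    intro j _ hji
    exact hsingle j (fs j) i (Ne.symm hji)
  rw [Finset.sum_eq_single i (fun j _ hji => hrest j (Finset.mem_univ j) hji)
      (fun h => absurd (Finset.mem_univ i) h), hkey, zero_add]
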